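/- Consider a BPVE with generating functions Φ_n, first moments m_n > 0 and second moments m_n^{(2)} satisfying m_n^{(2)} < ∞ for every sufficiently large n. Suppose there exist a sequence (c_i)_{i∈ℕ} of positive reals with ∑_{i=0}^∞ c_i/m_i < ∞, an n₁ ∈ ℕ and C > 0 such that ∑_{j=n₁}^∞ ((m^{(2)}_j − m_j)/m_j²)·(C^j ∏_{i=n₁}^{j−1} c_i)^{−1} < ∞ and inf_{n∈ℕ} C^n ∏_{i=0}^{n} c_i > 0. Then there exist n₀ ∈ ℕ and a sequence (p_n)_{n∈ℕ} with p_n ∈ (0,1] for all n and ∑_{n=0}^∞ p_n < ∞, with p_n = C·c_n/m_n for all n ≥ n₀, such that the thinned BPVE with generating functions Φ̃_n(z) := Φ_n(1 − p_n + p_n z) survives, i.e. its extinction probability is strictly less than 1. -/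

import Mathlib

set_option maxHeartbeats 1600000


open Filter ENNReal

/-- Probability generating function `Φ_n(z) := ∑_i ρ_n(i) z^i` of the `n`-th offspring
distribution of a branching process in varying environment (BPVE). -/
noncomputable def Phi (ρ : ℕ → ℕ → ℝ) (n : ℕ) (z : ℝ) : ℝ :=
  ∑' i : ℕ, ρ n i * z ^ i

/-- The iterated generating functions `H_0(z) := z`, `H_{n+1} := H_n ∘ Φ_n`;
`H_n(0)` is the probability of extinction by generation `n`, and the extinction
probability is `p_e = lim_n H_n(0)`. -/
noncomputable def Hseq (ρ : ℕ → ℕ → ℝ) : ℕ → ℝ → ℝ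
  | 0 => fun z => z
  | n + 1 => fun z => Hseq ρ n (Phi ρ n z)

/-- First moment `m_n := ∑_i i ρ_n(i) ∈ [0,∞]` of the `n`-th offspring distribution. -/
noncomputable def mom (ρ : ℕ → ℕ → ℝ) (n : ℕ) : ℝ≥0∞ :=
  ∑' i : ℕ, (i : ℝ≥0∞) * ENNReal.ofReal (ρ n i)

/-- Second moment `m_n⁽²⁾ := ∑_i i² ρ_n(i) ∈ [0,∞]` of the `n`-th offspring
distribution. -/
noncomputable def mom2 (ρ : ℕ → ℕ → ℝ) (n : ℕ) : ℝ≥0∞ :=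
  ∑' i : ℕ, (i : ℝ≥0∞) ^ 2 * ENNReal.ofReal (ρ n i)

/-- Iteration `H_0 = id`, `H_{n+1} = H_n ∘ Φ_n` for an arbitrary sequence of
generating functions `Φ`. -/
noncomputable def HseqF (Φ : ℕ → ℝ → ℝ) : ℕ → ℝ → ℝ
  | 0 => fun z => z
  | n + 1 => fun z => HseqF Φ n (Φ n z)


noncomputable def geomA (s : ℝ) (i : ℕ) : ℝ := ∑ k ∈ Finset.range i, s ^ k
noncomputable def geomB (s : ℝ) (i : ℕ) : ℝ := ∑ k ∈ Finset.range i, geomA s k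

section GeomFacts

variable {s : ℝ}

lemma geomA_zero : geomA s 0 = 0 := by simp [geomA]

lemma geomA_nonneg (h0 : 0 ≤ s) (i : ℕ) : 0 ≤ geomA s i :=
  Finset.sum_nonneg fun k _ => pow_nonneg h0 k

lemma geomB_nonneg (h0 : 0 ≤ s) (i : ℕ) : 0 ≤ geomB s i :=
  Finset.sum_nonneg fun k _ => geomA_nonneg h0 k

lemma geomA_mono (h0 : 0 ≤ s) : Monotone (geomA s) := fun i j hij =>
  Finset.sum_le_sum_of_subset_of_nonneg (Finset.range_subset_range.2 hij)
    (fun k _ _ => pow_nonneg h0 k)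

lemma geomA_le (h0 : 0 ≤ s) (h1 : s ≤ 1) (i : ℕ) : geomA s i ≤ (i : ℝ) := by
  have := Finset.sum_le_card_nsmul (Finset.range i) (fun k => s ^ k) 1
    (fun k _ => pow_le_one₀ h0 h1)
  simpa [geomA] using this

lemma geomA_ge_one (h0 : 0 ≤ s) {i : ℕ} (hi : 1 ≤ i) : 1 ≤ geomA s i := by
  have h := Finset.single_le_sum (f := fun k => s ^ k)
    (fun k _ => pow_nonneg h0 k) (Finset.mem_range.2 hi)
  simpa [geomA] using h

lemma geomA_sub (i : ℕ) : (1 - s) * geomA s i = 1 - s ^ i := by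
  have := geom_sum_mul s i
  unfold geomA
  nlinarith [this]

lemma geomB_le (h0 : 0 ≤ s) (j : ℕ) : geomB s j ≤ ((j : ℝ) - 1) * geomA s j := by
  rcases Nat.eq_zero_or_pos j with rfl | hj
  · simp [geomB, geomA]
  · have hsplit : ∑ k ∈ Finset.range 1, geomA s k + ∑ k ∈ Finset.Ico 1 j, geomA s k
        = ∑ k ∈ Finset.range j, geomA s k := Finset.sum_range_add_sum_Ico _ hj
    have h2 : ∑ k ∈ Finset.Ico 1 j, geomA s k ≤ ((j : ℝ) - 1) * geomA s j := by
      have := Finset.sum_le_card_nsmul (Finset.Ico 1 j) (geomA s) (geomA s j)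
        (fun k hk => geomA_mono h0 (le_of_lt (Finset.mem_Ico.1 hk).2))
      rw [Nat.card_Ico] at this
      calc ∑ k ∈ Finset.Ico 1 j, geomA s k ≤ (j - 1 : ℕ) • geomA s j := this
        _ = ((j : ℝ) - 1) * geomA s j := by
            rw [nsmul_eq_mul, Nat.cast_sub hj, Nat.cast_one]
    have h3 : ∑ k ∈ Finset.range 1, geomA s k = 0 := by simp [geomA]
    unfold geomB
    rw [← hsplit, h3, zero_add]
    exact h2

lemma geomB_le_sq (h0 : 0 ≤ s) (h1 : s ≤ 1) (i : ℕ) : geomB s i ≤ (i : ℝ) ^ 2 := by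
  have := Finset.sum_le_card_nsmul (Finset.range i) (geomA s) (i : ℝ)
    (fun k hk => le_trans (geomA_le h0 h1 k)
      (Nat.cast_le.2 (le_of_lt (Finset.mem_range.1 hk))))
  rw [Finset.card_range, nsmul_eq_mul] at this
  calc geomB s i ≤ (i : ℝ) * i := this
    _ = (i : ℝ) ^ 2 := (sq (i:ℝ)).symm

lemma geomA_key (h0 : 0 ≤ s) (h1 : s ≤ 1) {i j : ℕ} (hij : i ≤ j) : (i : ℝ) * geomA s j ≤ (j : ℝ) * geomA s i := by
  have hsplit : ∑ k ∈ Finset.range i, s ^ k + ∑ k ∈ Finset.Ico i j, s ^ k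
      = ∑ k ∈ Finset.range j, s ^ k := Finset.sum_range_add_sum_Ico _ hij
  have hstep : ∀ k ∈ Finset.Ico i j, (i : ℝ) * s ^ k ≤ geomA s i := by
    intro k hk
    have hk' := (Finset.mem_Ico.1 hk).1
    have := Finset.card_nsmul_le_sum (Finset.range i) (fun t => s ^ t) (s ^ k)
      (fun t ht => pow_le_pow_of_le_one h0 h1
        (le_trans (le_of_lt (Finset.mem_range.1 ht)) hk'))
    rw [Finset.card_range, nsmul_eq_mul] at this
    exact this
  have h2 : (i : ℝ) * ∑ k ∈ Finset.Ico i j, s ^ k ≤ ((j : ℝ) - i) * geomA s i := by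
    rw [Finset.mul_sum]
    calc ∑ k ∈ Finset.Ico i j, (i : ℝ) * s ^ k ≤ ∑ k ∈ Finset.Ico i j, geomA s i :=
          Finset.sum_le_sum hstep
      _ = (j - i : ℕ) • geomA s i := by rw [Finset.sum_const, Nat.card_Ico]
      _ = ((j : ℝ) - i) * geomA s i := by rw [nsmul_eq_mul, Nat.cast_sub hij]
  have hA : geomA s j = geomA s i + ∑ k ∈ Finset.Ico i j, s ^ k := by
    unfold geomA; rw [← hsplit]
  have hic : (0 : ℝ) ≤ (i : ℝ) := Nat.cast_nonneg i
  nlinarith [h2, hA, mul_le_mul_of_nonneg_left (le_of_eq hA) hic]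

lemma geom_pair_aux (h0 : 0 ≤ s) (h1 : s ≤ 1) {i j : ℕ} (hij : i ≤ j) :
    (i : ℝ) * geomB s j + (j : ℝ) * geomB s i
      ≤ ((i : ℝ) ^ 2 - i) * geomA s j + ((j : ℝ) ^ 2 - j) * geomA s i := by
  have hbj := geomB_le h0 j
  have hbi := geomB_le h0 i
  have hkey := geomA_key h0 h1 hij
  have hic : (0 : ℝ) ≤ (i : ℝ) := Nat.cast_nonneg i
  have hjc : (0 : ℝ) ≤ (j : ℝ) := Nat.cast_nonneg j
  have hijc : (i : ℝ) ≤ (j : ℝ) := Nat.cast_le.2 hij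
  have e1 : (i : ℝ) * geomB s j ≤ (i : ℝ) * (((j : ℝ) - 1) * geomA s j) :=
    mul_le_mul_of_nonneg_left hbj hic
  have e2 : (j : ℝ) * geomB s i ≤ (j : ℝ) * (((i : ℝ) - 1) * geomA s i) :=
    mul_le_mul_of_nonneg_left hbi hjc
  have e3 : 0 ≤ ((j : ℝ) - i) * ((j : ℝ) * geomA s i - (i : ℝ) * geomA s j) :=
    mul_nonneg (by linarith) (by linarith)
  nlinarith [e1, e2, e3]

lemma geom_pair (h0 : 0 ≤ s) (h1 : s ≤ 1) (i j : ℕ) :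
    (i : ℝ) * geomB s j + (j : ℝ) * geomB s i
      ≤ ((i : ℝ) ^ 2 - i) * geomA s j + ((j : ℝ) ^ 2 - j) * geomA s i := by
  rcases le_total i j with hij | hij
  · exact geom_pair_aux h0 h1 hij
  · have := geom_pair_aux h0 h1 hij
    linarith

end GeomFacts

lemma tsum_mul_tsum_le_of_sym {u v x y : ℕ → ℝ}
    (hu : Summable u) (hv : Summable v) (hx : Summable x) (hy : Summable y)
    (h : ∀ i j, u i * v j + u j * v i ≤ x i * y j + x j * y i) :
    (∑' i, u i) * (∑' j, v j) ≤ (∑' i, x i) * (∑' j, y j) := by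
  have lhs : ∑' i, (u i * (∑' j, v j) + (∑' j, u j) * v i)
      = (∑' i, u i) * (∑' j, v j) + (∑' j, u j) * (∑' i, v i) := by
    rw [Summable.tsum_add (hu.mul_right _) (hv.mul_left _), tsum_mul_right, tsum_mul_left]
  have rhs : ∑' i, (x i * (∑' j, y j) + (∑' j, x j) * y i)
      = (∑' i, x i) * (∑' j, y j) + (∑' j, x j) * (∑' i, y i) := by
    rw [Summable.tsum_add (hx.mul_right _) (hy.mul_left _), tsum_mul_right, tsum_mul_left]
  have key : ∑' i, (u i * (∑' j, v j) + (∑' j, u j) * v i)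
      ≤ ∑' i, (x i * (∑' j, y j) + (∑' j, x j) * y i) := by
    apply Summable.tsum_le_tsum _ ((hu.mul_right _).add (hv.mul_left _))
      ((hx.mul_right _).add (hy.mul_left _))
    intro i
    have e1 : u i * (∑' j, v j) + (∑' j, u j) * v i = ∑' j, (u i * v j + u j * v i) := by
      rw [Summable.tsum_add (hv.mul_left _) (hu.mul_right _), tsum_mul_left, tsum_mul_right]
    have e2 : x i * (∑' j, y j) + (∑' j, x j) * y i = ∑' j, (x i * y j + x j * y i) := by
      rw [Summable.tsum_add (hy.mul_left _) (hx.mul_right _), tsum_mul_left, tsum_mul_right]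
    rw [e1, e2]
    exact Summable.tsum_le_tsum (fun j => h i j)
      ((hv.mul_left _).add (hu.mul_right _)) ((hy.mul_left _).add (hx.mul_right _))
  linarith

lemma pgf_le_affine (r : ℕ → ℝ) (hr0 : ∀ i, 0 ≤ r i) (hr1 : HasSum r 1)
    {u : ℝ} (h0 : 0 ≤ u) (h1 : u ≤ 1) :
    (∑' i, r i * u ^ i) ≤ r 0 + u * (1 - r 0) := by
  have sfs : Summable fun i => r i * u ^ i :=
    Summable.of_nonneg_of_le (fun i => mul_nonneg (hr0 i) (pow_nonneg h0 i))
      (fun i => mul_le_of_le_one_right (hr0 i) (pow_le_one₀ h0 h1)) hr1.summable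
  have htail : Summable fun i => r (i + 1) * u ^ (i + 1) := by
    exact (summable_nat_add_iff 1).2 sfs
  have htail2 : Summable fun i => r (i + 1) := (summable_nat_add_iff 1).2 hr1.summable
  rw [Summable.tsum_eq_zero_add sfs]
  have h2 : ∑' i, r (i + 1) * u ^ (i + 1) ≤ ∑' i, r (i + 1) * u := by
    apply Summable.tsum_le_tsum _ htail (htail2.mul_right u)
    intro i
    exact mul_le_mul_of_nonneg_left
      (by simpa using pow_le_pow_of_le_one h0 h1 (Nat.one_le_iff_ne_zero.2 (Nat.succ_ne_zero i)))
      (hr0 _)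
  have h3 : ∑' i, r (i + 1) * u = (1 - r 0) * u := by
    rw [tsum_mul_right]
    congr 1
    have := Summable.tsum_eq_zero_add hr1.summable
    rw [hr1.tsum_eq] at this
    linarith
  simp only [pow_zero, mul_one]
  linarith [h2, h3.le, h3.ge]

lemma agresti (r : ℕ → ℝ) (hr0 : ∀ i, 0 ≤ r i) (hr1 : HasSum r 1) (hr0lt : r 0 < 1)
    (hs2 : Summable fun i : ℕ => (i : ℝ) ^ 2 * r i) {s : ℝ} (h0 : 0 ≤ s) (h1 : s < 1) :
    (∑' i, r i * s ^ i) < 1 ∧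
      1 / (1 - ∑' i, r i * s ^ i) ≤
        1 / ((∑' i : ℕ, (i : ℝ) * r i) * (1 - s)) +
          ((∑' i : ℕ, (i : ℝ) ^ 2 * r i) - ∑' i : ℕ, (i : ℝ) * r i) / (∑' i : ℕ, (i : ℝ) * r i) ^ 2 := by
  have h1' : s ≤ 1 := le_of_lt h1
  have hs' : (0 : ℝ) < 1 - s := by linarith
  have hs1 : Summable fun i : ℕ => (i : ℝ) * r i := by
    apply Summable.of_nonneg_of_le (fun i => mul_nonneg (Nat.cast_nonneg i) (hr0 i)) _ hs2
    intro i
    have : (i : ℝ) ≤ (i : ℝ) ^ 2 := by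
      have : i ≤ i ^ 2 := Nat.le_self_pow two_ne_zero i
      exact_mod_cast this
    exact mul_le_mul_of_nonneg_right this (hr0 i)
  have sfs : Summable fun i => r i * s ^ i :=
    Summable.of_nonneg_of_le (fun i => mul_nonneg (hr0 i) (pow_nonneg h0 i))
      (fun i => mul_le_of_le_one_right (hr0 i) (pow_le_one₀ h0 h1')) hr1.summable
  have sA : Summable fun i => r i * geomA s i := by
    apply Summable.of_nonneg_of_le (fun i => mul_nonneg (hr0 i) (geomA_nonneg h0 i)) _ hs1
    intro i
    calc r i * geomA s i ≤ r i * i := mul_le_mul_of_nonneg_left (geomA_le h0 h1' i) (hr0 i)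
      _ = (i : ℝ) * r i := mul_comm _ _
  have sB : Summable fun i => r i * geomB s i := by
    apply Summable.of_nonneg_of_le (fun i => mul_nonneg (hr0 i) (geomB_nonneg h0 i)) _ hs2
    intro i
    calc r i * geomB s i ≤ r i * (i : ℝ) ^ 2 :=
          mul_le_mul_of_nonneg_left (geomB_le_sq h0 h1' i) (hr0 i)
      _ = (i : ℝ) ^ 2 * r i := mul_comm _ _
  have sX : Summable fun i : ℕ => ((i : ℝ) ^ 2 - i) * r i := by
    apply (hs2.sub hs1).congr
    intro i
    exact (sub_mul _ _ _).symm
  set m := ∑' i : ℕ, (i : ℝ) * r i with hm_def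
  set m2 := ∑' i : ℕ, (i : ℝ) ^ 2 * r i with hm2_def
  set g := ∑' i, r i * geomA s i with hg_def
  set Bs := ∑' i, r i * geomB s i with hBs_def
  -- 1 - f s = (1-s) * g
  have hfg : 1 - (∑' i, r i * s ^ i) = (1 - s) * g := by
    have hterm : ∀ i, r i - r i * s ^ i = (1 - s) * (r i * geomA s i) := by
      intro i
      have h := geomA_sub (s := s) i
      linear_combination (-(r i)) * h
    calc 1 - (∑' i, r i * s ^ i) = (∑' i, r i) - ∑' i, r i * s ^ i := by rw [hr1.tsum_eq]
      _ = ∑' i, (r i - r i * s ^ i) := (Summable.tsum_sub hr1.summable sfs).symm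
      _ = ∑' i, (1 - s) * (r i * geomA s i) := tsum_congr hterm
      _ = (1 - s) * g := tsum_mul_left
  -- g ≥ 1 - r 0 > 0
  have g_ge : 1 - r 0 ≤ g := by
    have hh : Summable fun i => if i = 0 then (0 : ℝ) else r i := by
      apply Summable.of_nonneg_of_le _ _ hr1.summable
      · intro i; split <;> simp [hr0]
      · intro i; split <;> simp [hr0, le_refl]
    have hsum_ite : Summable fun i : ℕ => if i = 0 then r 0 else (0 : ℝ) :=
      (hasSum_ite_eq 0 (r 0)).summable
    have hval : (∑' i, if i = 0 then (0 : ℝ) else r i) = 1 - r 0 := by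
      have hsplit : (∑' i : ℕ, ((if i = 0 then (0 : ℝ) else r i) + if i = 0 then r 0 else 0))
          = (∑' i, if i = 0 then (0 : ℝ) else r i) + ∑' i : ℕ, (if i = 0 then r 0 else (0:ℝ)) :=
        Summable.tsum_add hh hsum_ite
      have hcongr : (∑' i : ℕ, ((if i = 0 then (0 : ℝ) else r i) + if i = 0 then r 0 else 0))
          = ∑' i, r i := by
        apply tsum_congr; intro i; split <;> simp_all
      rw [hcongr, hr1.tsum_eq, tsum_ite_eq] at hsplit
      linarith
    rw [← hval]
    apply Summable.tsum_le_tsum _ hh sA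
    intro i
    rcases Nat.eq_zero_or_pos i with rfl | hi
    · simp [geomA_zero]
    · simp only [Nat.pos_iff_ne_zero.1 hi, if_neg (Nat.pos_iff_ne_zero.1 hi)]
      exact le_mul_of_one_le_right (hr0 i) (geomA_ge_one h0 hi)
  have g_pos : 0 < g := lt_of_lt_of_le (by linarith) g_ge
  have g_le_m : g ≤ m := by
    apply Summable.tsum_le_tsum _ sA hs1
    intro i
    calc r i * geomA s i ≤ r i * i := mul_le_mul_of_nonneg_left (geomA_le h0 h1' i) (hr0 i)
      _ = (i : ℝ) * r i := mul_comm _ _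
  have m_pos : 0 < m := lt_of_lt_of_le g_pos g_le_m
  have f_lt : (∑' i, r i * s ^ i) < 1 := by nlinarith [hfg, g_pos, hs']
  refine ⟨f_lt, ?_⟩
  -- m - g = (1-s) * Bs
  have hBg : m - g = (1 - s) * Bs := by
    have hiA : ∀ i : ℕ, (i : ℝ) - geomA s i = (1 - s) * geomB s i := by
      intro i
      have e1 : (i : ℝ) - geomA s i = ∑ k ∈ Finset.range i, (1 - s ^ k) := by
        rw [Finset.sum_sub_distrib, Finset.sum_const, Finset.card_range, nsmul_eq_mul, mul_one]
        rfl
      rw [e1]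
      have e2 : ∀ k ∈ Finset.range i, 1 - s ^ k = (1 - s) * geomA s k := by
        intro k _; exact (geomA_sub k).symm
      rw [Finset.sum_congr rfl e2, ← Finset.mul_sum]
      rfl
    have hterm : ∀ i : ℕ, (i : ℝ) * r i - r i * geomA s i = (1 - s) * (r i * geomB s i) := by
      intro i
      have h := hiA i
      linear_combination r i * h
    calc m - g = ∑' i : ℕ, ((i : ℝ) * r i - r i * geomA s i) := (Summable.tsum_sub hs1 sA).symm
      _ = ∑' i, (1 - s) * (r i * geomB s i) := tsum_congr hterm
      _ = (1 - s) * Bs := tsum_mul_left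
  -- KEY : m * Bs ≤ (m2 - m) * g
  have hD : m2 - m = ∑' i : ℕ, ((i : ℝ) ^ 2 - i) * r i := by
    rw [show (∑' i : ℕ, ((i:ℝ)^2 - i) * r i) = ∑' i : ℕ, ((i:ℝ)^2 * r i - (i:ℝ) * r i) from
      tsum_congr fun i => sub_mul _ _ _, Summable.tsum_sub hs2 hs1]
  have KEY : m * Bs ≤ (m2 - m) * g := by
    rw [hD]
    apply tsum_mul_tsum_le_of_sym hs1 sB sX sA
    intro i j
    have hp := geom_pair h0 h1' i j
    have hrr : 0 ≤ r i * r j := mul_nonneg (hr0 i) (hr0 j)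
    calc (i : ℝ) * r i * (r j * geomB s j) + (j : ℝ) * r j * (r i * geomB s i)
        = r i * r j * ((i : ℝ) * geomB s j + (j : ℝ) * geomB s i) := by ring
      _ ≤ r i * r j * (((i : ℝ) ^ 2 - i) * geomA s j + ((j : ℝ) ^ 2 - j) * geomA s i) :=
          mul_le_mul_of_nonneg_left hp hrr
      _ = ((i : ℝ) ^ 2 - i) * r i * (r j * geomA s j)
            + ((j : ℝ) ^ 2 - j) * r j * (r i * geomA s i) := by ring
  -- conclude
  have key2 : m * (m - g) ≤ (1 - s) * ((m2 - m) * g) := by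
    rw [hBg]
    calc m * ((1 - s) * Bs) = (1 - s) * (m * Bs) := by ring
      _ ≤ (1 - s) * ((m2 - m) * g) := mul_le_mul_of_nonneg_left KEY hs'.le
  rw [hfg]
  rw [div_add_div _ _ (by positivity) (by positivity), div_le_div_iff₀ (by positivity) (by positivity)]
  nlinarith [mul_le_mul_of_nonneg_left key2 (mul_pos m_pos hs').le, g_pos, m_pos, hs']

noncomputable def Tcomp (Φ : ℕ → ℝ → ℝ) : ℕ → ℕ → ℝ
  | _, 0 => 0
  | a, n + 1 => Φ a (Tcomp Φ (a + 1) n)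

lemma hseqF_succ (Φ : ℕ → ℝ → ℝ) : ∀ n z, HseqF Φ (n + 1) z = Φ 0 (HseqF (fun k => Φ (k + 1)) n z) := by
  intro n
  induction n with
  | zero => intro z; simp [HseqF]
  | succ n ih =>
    intro z
    calc HseqF Φ (n + 2) z = HseqF Φ (n + 1) (Φ (n + 1) z) := rfl
      _ = Φ 0 (HseqF (fun k => Φ (k + 1)) n (Φ (n + 1) z)) := ih _
      _ = Φ 0 (HseqF (fun k => Φ (k + 1)) (n + 1) z) := rfl

lemma hseqF_eq_Tcomp (Φ : ℕ → ℝ → ℝ) : ∀ n a, HseqF (fun k => Φ (a + k)) n 0 = Tcomp Φ a n := by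
  intro n
  induction n with
  | zero => intro a; rfl
  | succ n ih =>
    intro a
    rw [hseqF_succ]
    have hfe : (fun k => (fun k' => Φ (a + k')) (k + 1)) = fun k => Φ ((a + 1) + k) := by
      funext k
      have h : a + (k + 1) = (a + 1) + k := by omega
      simp only []
      rw [h]
    calc (fun k => Φ (a + k)) 0 (HseqF (fun k => (fun k' => Φ (a + k')) (k + 1)) n 0)
        = Φ (a + 0) (HseqF (fun k => Φ ((a + 1) + k)) n 0) := by rw [hfe]
      _ = Φ a (Tcomp Φ (a + 1) n) := by rw [ih]; congr 1
      _ = Tcomp Φ a (n + 1) := rfl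

lemma hseqF_zero_eq_Tcomp (Φ : ℕ → ℝ → ℝ) (n : ℕ) : HseqF Φ n 0 = Tcomp Φ 0 n := by
  have := hseqF_eq_Tcomp Φ n 0
  simpa using this

/-- analytic core of the survival theorem for BPVEs with selection.
Under the stated moment conditions (with a sequence `(c_i)` of positive reals with
`∑ c_i/m_i < ∞`, a constant `C > 0` and an index `n₁`), there are `n₀ ∈ ℕ` and
thinning probabilities `p_n ∈ (0,1]` with `∑ p_n < ∞` and `p_n = C·c_n/m_n` for
`n ≥ n₀`, such that the thinned BPVE with generating functions
`Φ̃_n(z) = Φ_n(1 − p_n + p_n z)` survives. -/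
theorem thinned_bpve_survival (ρ : ℕ → ℕ → ℝ)
    (hρ0 : ∀ n i, 0 ≤ ρ n i) (hρ1 : ∀ n, HasSum (ρ n) 1)
    (hρlt : ∀ n, ρ n 0 < 1)
    (hm : ∀ n, 0 < mom ρ n)
    (hm2 : ∀ᶠ n in atTop, mom2 ρ n < ⊤)
    (c : ℕ → ℝ) (hc : ∀ i, 0 < c i)
    (hcm : ∑' i : ℕ, ENNReal.ofReal (c i) / mom ρ i < ⊤)
    (n₁ : ℕ) (C : ℝ) (hC : 0 < C)
    (hconv : ∑' j : ℕ, ((mom2 ρ (n₁ + j) - mom ρ (n₁ + j)) / (mom ρ (n₁ + j)) ^ 2) /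
        ENNReal.ofReal (C ^ (n₁ + j) * ∏ i ∈ Finset.Ico n₁ (n₁ + j), c i) < ⊤)
    (hinf : 0 < ⨅ n : ℕ, C ^ n * ∏ i ∈ Finset.range (n + 1), c i) :
    ∃ n₀ : ℕ, ∃ p : ℕ → ℝ,
      (∀ n, p n ∈ Set.Ioc (0 : ℝ) 1) ∧ Summable p ∧
      (∀ n ≥ n₀, p n = C * c n / (mom ρ n).toReal) ∧
      ∀ q : ℝ,
        Tendsto (fun n => HseqF (fun n z => Phi ρ n (1 - p n + p n * z)) n 0)
          atTop (nhds q) →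
        q < 1 := by
  classical
  set mr : ℕ → ℝ := fun n => (mom ρ n).toReal with hmr_def
  set m2r : ℕ → ℝ := fun n => (mom2 ρ n).toReal with hm2r_def
  obtain ⟨N₂, hN₂⟩ := eventually_atTop.1 hm2
  -- basic ENNReal facts
  have mom_le_mom2 : ∀ n, mom ρ n ≤ mom2 ρ n := by
    intro n
    apply ENNReal.tsum_le_tsum
    intro i
    refine mul_le_mul_left ?_ _
    calc (i : ℝ≥0∞) ≤ ((i ^ 2 : ℕ) : ℝ≥0∞) := Nat.cast_le.2 (Nat.le_self_pow two_ne_zero i)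
      _ = (i : ℝ≥0∞) ^ 2 := by rw [Nat.cast_pow]
  have momfin : ∀ n ≥ N₂, mom ρ n < ⊤ :=
    fun n hn => lt_of_le_of_lt (mom_le_mom2 n) (hN₂ n hn)
  have mrpos : ∀ n ≥ N₂, 0 < mr n :=
    fun n hn => ENNReal.toReal_pos (hm n).ne' (momfin n hn).ne
  have mr_eq : ∀ n, mr n = ∑' i : ℕ, (i : ℝ) * ρ n i := by
    intro n
    show (mom ρ n).toReal = _
    rw [mom, ENNReal.tsum_toReal_eq
      (fun i => ENNReal.mul_ne_top (ENNReal.natCast_ne_top i) ENNReal.ofReal_ne_top)]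
    exact tsum_congr fun i => by
      rw [ENNReal.toReal_mul, ENNReal.toReal_natCast, ENNReal.toReal_ofReal (hρ0 n i)]
  have m2r_eq : ∀ n, m2r n = ∑' i : ℕ, (i : ℝ) ^ 2 * ρ n i := by
    intro n
    show (mom2 ρ n).toReal = _
    rw [mom2, ENNReal.tsum_toReal_eq
      (fun i => ENNReal.mul_ne_top (pow_ne_top (ENNReal.natCast_ne_top i)) ENNReal.ofReal_ne_top)]
    exact tsum_congr fun i => by
      rw [ENNReal.toReal_mul, ENNReal.toReal_pow, ENNReal.toReal_natCast,
        ENNReal.toReal_ofReal (hρ0 n i)]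
  have hsum2 : ∀ n ≥ N₂, Summable fun i : ℕ => (i : ℝ) ^ 2 * ρ n i := by
    intro n hn
    have h := ENNReal.summable_toReal (f := fun i : ℕ => (i : ℝ≥0∞) ^ 2 * ENNReal.ofReal (ρ n i))
      (by rw [← mom2]; exact (hN₂ n hn).ne)
    refine h.congr fun i => ?_
    rw [ENNReal.toReal_mul, ENNReal.toReal_pow, ENNReal.toReal_natCast,
      ENNReal.toReal_ofReal (hρ0 n i)]
  -- choose N₃
  have hterms0 : Tendsto (fun i => ENNReal.ofReal (c i) / mom ρ i) atTop (nhds 0) :=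
    ENNReal.tendsto_atTop_zero_of_tsum_ne_top hcm.ne
  have hpos1C : (0 : ℝ≥0∞) < ENNReal.ofReal (1 / C) := ENNReal.ofReal_pos.2 (by positivity)
  obtain ⟨N₃, hN₃⟩ := eventually_atTop.1 (hterms0.eventually (Iio_mem_nhds hpos1C))
  set n₀ := max n₁ (max N₂ N₃) with hn₀_def
  have hn₀1 : n₁ ≤ n₀ := le_max_left _ _
  have hn₀2 : N₂ ≤ n₀ := le_trans (le_max_left _ _) (le_max_right _ _)
  have hn₀3 : N₃ ≤ n₀ := le_trans (le_max_right _ _) (le_max_right _ _)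
  -- the thinning probabilities
  set p : ℕ → ℝ := fun n => if n < n₀ then 1 else C * c n / mr n with hp_def
  have hp_ge : ∀ n, n₀ ≤ n → p n = C * c n / mr n := by
    intro n hn; simp only [hp_def]; rw [if_neg (not_lt.2 hn)]
  have hCc_le_mr : ∀ n, n₀ ≤ n → C * c n ≤ mr n := by
    intro n hn
    have h1 := hN₃ n (le_trans hn₀3 hn)
    have hfin : mom ρ n ≠ ⊤ := (momfin n (le_trans hn₀2 hn)).ne
    have h2 : (ENNReal.ofReal (c n) / mom ρ n).toReal ≤ 1 / C := by
      calc (ENNReal.ofReal (c n) / mom ρ n).toReal ≤ (ENNReal.ofReal (1 / C)).toReal :=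
            ENNReal.toReal_mono ENNReal.ofReal_ne_top (le_of_lt h1)
        _ = 1 / C := ENNReal.toReal_ofReal (by positivity)
    rw [ENNReal.toReal_div, ENNReal.toReal_ofReal (hc n).le] at h2
    have hmr := mrpos n (le_trans hn₀2 hn)
    rw [div_le_div_iff₀ hmr hC] at h2
    linarith
  have hp_mem : ∀ n, p n ∈ Set.Ioc (0 : ℝ) 1 := by
    intro n
    by_cases hn : n < n₀
    · simp [hp_def, hn]
    · push_neg at hn
      have hmr := mrpos n (le_trans hn₀2 hn)
      constructor
      · rw [hp_ge n hn]
        exact div_pos (mul_pos hC (hc n)) hmr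
      · rw [hp_ge n hn]
        rw [div_le_one hmr]
        exact hCc_le_mr n hn
  have w2_eq : ∀ n, N₂ ≤ n → (ENNReal.ofReal (c n) / mom ρ n).toReal = c n / mr n := by
    intro n hn
    rw [ENNReal.toReal_div, ENNReal.toReal_ofReal (hc n).le]
  have hp_sum : Summable p := by
    have hw2 : Summable fun i => (ENNReal.ofReal (c i) / mom ρ i).toReal :=
      ENNReal.summable_toReal hcm.ne
    refine (summable_nat_add_iff n₀).1 ?_
    have h1 : Summable fun n => C * (ENNReal.ofReal (c (n + n₀)) / mom ρ (n + n₀)).toReal :=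
      (((summable_nat_add_iff n₀).2 hw2)).mul_left C
    refine h1.congr fun n => ?_
    rw [w2_eq (n + n₀) (le_trans hn₀2 (Nat.le_add_left _ _)), hp_ge (n + n₀) (Nat.le_add_left _ _)]
    ring
  -- the thinned generating functions
  set Φt : ℕ → ℝ → ℝ := fun k z => Phi ρ k (1 - p k + p k * z) with hΦt_def
  refine ⟨n₀, p, hp_mem, hp_sum, fun n hn => hp_ge n hn, ?_⟩
  -- point membership
  have hu_mem : ∀ k z, 0 ≤ z → z ≤ 1 → 0 ≤ 1 - p k + p k * z ∧ 1 - p k + p k * z ≤ 1 := by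
    intro k z h0 h1
    obtain ⟨hpk0, hpk1⟩ := hp_mem k
    constructor <;> nlinarith
  have hu_lt : ∀ k z, z < 1 → 1 - p k + p k * z < 1 := by
    intro k z h1
    obtain ⟨hpk0, _⟩ := hp_mem k
    nlinarith
  -- step bounds
  have step_nonneg : ∀ k z, 0 ≤ z → z ≤ 1 → 0 ≤ Φt k z := by
    intro k z h0 h1
    obtain ⟨hu0, hu1⟩ := hu_mem k z h0 h1
    exact tsum_nonneg fun i => mul_nonneg (hρ0 k i) (pow_nonneg hu0 i)
  have step_low : ∀ k z, 0 ≤ z → z ≤ 1 →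
      p k * (1 - ρ k 0) * (1 - z) ≤ 1 - Φt k z := by
    intro k z h0 h1
    obtain ⟨hu0, hu1⟩ := hu_mem k z h0 h1
    have h := pgf_le_affine (ρ k) (hρ0 k) (hρ1 k) hu0 hu1
    have : Φt k z ≤ ρ k 0 + (1 - p k + p k * z) * (1 - ρ k 0) := h
    nlinarith [this]
  have step_lt1 : ∀ k z, 0 ≤ z → z < 1 → Φt k z < 1 := by
    intro k z h0 h1
    have h := step_low k z h0 (le_of_lt h1)
    obtain ⟨hpk0, _⟩ := hp_mem k
    have h2 := hρlt k
    nlinarith [mul_pos (mul_pos hpk0 (by linarith : (0:ℝ) < 1 - ρ k 0)) (by linarith : (0:ℝ) < 1 - z)]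
  -- membership of the compositions
  have Tmem : ∀ n a, 0 ≤ Tcomp Φt a n ∧ Tcomp Φt a n < 1 := by
    intro n
    induction n with
    | zero => intro a; constructor <;> simp [Tcomp]
    | succ n ih =>
      intro a
      obtain ⟨h0, h1⟩ := ih (a + 1)
      exact ⟨step_nonneg a _ h0 (le_of_lt h1), step_lt1 a _ h0 h1⟩
  -- Agresti step for the thinned pgf
  set ν : ℕ → ℝ := fun k => (m2r k - mr k) / (mr k) ^ 2 with hν_def
  have S2 : ∀ k, n₀ ≤ k → ∀ z, 0 ≤ z → z < 1 →
      1 / (1 - Φt k z) ≤ 1 / (C * c k * (1 - z)) + ν k := by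
    intro k hk z h0 h1
    obtain ⟨hu0, hu1⟩ := hu_mem k z h0 h1.le
    have hu1' : 1 - p k + p k * z < 1 := hu_lt k z h1
    have hag := agresti (ρ k) (hρ0 k) (hρ1 k) (hρlt k) (hsum2 k (le_trans hn₀2 hk)) hu0 hu1'
    have hΦ : Φt k z = ∑' i, ρ k i * (1 - p k + p k * z) ^ i := rfl
    have hmrpos := mrpos k (le_trans hn₀2 hk)
    have hpm : p k * mr k = C * c k := by
      rw [hp_ge k hk]; field_simp
    have hden : mr k * (1 - (1 - p k + p k * z)) = C * c k * (1 - z) := by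
      have h2 : 1 - (1 - p k + p k * z) = p k * (1 - z) := by ring
      rw [h2, ← hpm]; ring
    rw [hΦ]
    simp only [hν_def]
    calc 1 / (1 - ∑' i, ρ k i * (1 - p k + p k * z) ^ i)
        ≤ 1 / ((∑' i : ℕ, (i : ℝ) * ρ k i) * (1 - (1 - p k + p k * z))) +
          ((∑' i : ℕ, (i : ℝ) ^ 2 * ρ k i) - ∑' i : ℕ, (i : ℝ) * ρ k i) /
            (∑' i : ℕ, (i : ℝ) * ρ k i) ^ 2 := hag.2
      _ = 1 / (C * c k * (1 - z)) + (m2r k - mr k) / (mr k) ^ 2 := by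
          rw [← mr_eq, ← m2r_eq, hden]
  -- product bound machinery
  set Pprod : ℕ → ℕ → ℝ := fun a k => ∏ j ∈ Finset.range k, (C * c (a + j)) with hPprod_def
  have Ppos : ∀ a k, 0 < Pprod a k := by
    intro a k
    exact Finset.prod_pos fun j _ => mul_pos hC (hc (a + j))
  have reidx : ∀ (f : ℕ → ℝ) (a b : ℕ), ∏ j ∈ Finset.range (b + 1), f (a + j)
      = f a * ∏ j ∈ Finset.range b, f ((a + 1) + j) := by
    intro f a b
    rw [Finset.prod_range_succ', Nat.add_zero, mul_comm]
    congr 1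
    apply Finset.prod_congr rfl
    intro j _
    congr 1
    omega
  have hP : ∀ a k, Pprod a (k + 1) = (C * c a) * Pprod (a + 1) k := by
    intro a k
    simp only [hPprod_def]
    exact reidx (fun i => C * c i) a k
  have bound : ∀ n a, n₀ ≤ a → 1 / (1 - Tcomp Φt a n) ≤
      (∑ j ∈ Finset.range n, ν (a + j) / Pprod a j) + 1 / Pprod a n := by
    intro n
    induction n with
    | zero =>
      intro a _
      have hP0 : Pprod a 0 = 1 := by simp [hPprod_def]
      simp only [Tcomp, Finset.range_zero, Finset.sum_empty, zero_add, hP0]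
      norm_num
    | succ n ih =>
      intro a ha
      have hz := Tmem n (a + 1)
      have hstep := S2 a ha (Tcomp Φt (a + 1) n) hz.1 hz.2
      have hih := ih (a + 1) (le_trans ha (Nat.le_succ a))
      have hCca : 0 < C * c a := mul_pos hC (hc a)
      have hzlt : 0 < 1 - Tcomp Φt (a + 1) n := by linarith [hz.2]
      have h2 : 1 / (C * c a * (1 - Tcomp Φt (a + 1) n))
          = (1 / (C * c a)) * (1 / (1 - Tcomp Φt (a + 1) n)) := by
        rw [one_div, one_div, one_div, mul_inv]
      have h4 : (0:ℝ) < 1 / (C * c a) := by positivity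
      have hTc : Tcomp Φt a (n + 1) = Φt a (Tcomp Φt (a + 1) n) := rfl
      have hP0 : Pprod a 0 = 1 := by simp [hPprod_def]
      calc 1 / (1 - Tcomp Φt a (n + 1)) = 1 / (1 - Φt a (Tcomp Φt (a + 1) n)) := by rw [hTc]
        _ ≤ 1 / (C * c a * (1 - Tcomp Φt (a + 1) n)) + ν a := hstep
        _ = (1 / (C * c a)) * (1 / (1 - Tcomp Φt (a + 1) n)) + ν a := by rw [h2]
        _ ≤ (1 / (C * c a)) * ((∑ j ∈ Finset.range n, ν ((a + 1) + j) / Pprod (a + 1) j)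
              + 1 / Pprod (a + 1) n) + ν a := by
            have h5 := mul_le_mul_of_nonneg_left hih h4.le
            linarith
        _ = (∑ j ∈ Finset.range (n + 1), ν (a + j) / Pprod a j) + 1 / Pprod a (n + 1) := by
            have hterm : ∀ j, ν (a + (j + 1)) / Pprod a (j + 1)
                = (1 / (C * c a)) * (ν ((a + 1) + j) / Pprod (a + 1) j) := by
              intro j
              have hidx : a + (j + 1) = (a + 1) + j := by omega
              rw [hP a j, hidx]
              field_simp
            rw [Finset.sum_range_succ', Finset.sum_congr rfl fun j _ => hterm j,
              hP a n, Nat.add_zero, hP0, ← Finset.mul_sum]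
            have hPp := Ppos (a + 1) n
            field_simp
            ring
  -- numeric bound for a = n₀
  obtain ⟨M, hMpos, hM⟩ : ∃ M : ℝ, 0 < M ∧ ∀ n,
      (∑ j ∈ Finset.range n, ν (n₀ + j) / Pprod n₀ j) + 1 / Pprod n₀ n ≤ M := by
    set w : ℕ → ℝ := fun j => (((mom2 ρ (n₁ + j) - mom ρ (n₁ + j)) / (mom ρ (n₁ + j)) ^ 2) /
        ENNReal.ofReal (C ^ (n₁ + j) * ∏ i ∈ Finset.Ico n₁ (n₁ + j), c i)).toReal with hw_def
    have hw_sum : Summable w := ENNReal.summable_toReal hconv.ne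
    have hw_nonneg : ∀ j, 0 ≤ w j := fun j => ENNReal.toReal_nonneg
    have key : ∀ j, n₀ ≤ n₁ + j →
        w j = ν (n₁ + j) / (C ^ (n₁ + j) * ∏ i ∈ Finset.Ico n₁ (n₁ + j), c i) := by
      intro j hj
      have hdp : (0:ℝ) < C ^ (n₁ + j) * ∏ i ∈ Finset.Ico n₁ (n₁ + j), c i :=
        mul_pos (pow_pos hC _) (Finset.prod_pos fun i _ => hc i)
      have hfin2 : mom2 ρ (n₁ + j) ≠ ⊤ := (hN₂ _ (le_trans hn₀2 hj)).ne
      simp only [hw_def]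
      rw [ENNReal.toReal_div, ENNReal.toReal_div, ENNReal.toReal_ofReal hdp.le,
        ENNReal.toReal_pow, ENNReal.toReal_sub_of_le (mom_le_mom2 _) hfin2]
    have hKp : (0:ℝ) < C ^ n₀ * ∏ i ∈ Finset.Ico n₁ n₀, c i :=
      mul_pos (pow_pos hC _) (Finset.prod_pos fun i _ => hc i)
    have hrel : ∀ j : ℕ, C ^ (n₀ + j) * ∏ i ∈ Finset.Ico n₁ (n₀ + j), c i
        = (C ^ n₀ * ∏ i ∈ Finset.Ico n₁ n₀, c i) * Pprod n₀ j := by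
      intro j
      have h1 : ∏ i ∈ Finset.Ico n₁ (n₀ + j), c i
          = (∏ i ∈ Finset.Ico n₁ n₀, c i) * ∏ i ∈ Finset.Ico n₀ (n₀ + j), c i :=
        (Finset.prod_Ico_consecutive _ hn₀1 (Nat.le_add_right _ _)).symm
      have h2 : ∏ i ∈ Finset.Ico n₀ (n₀ + j), c i = ∏ jj ∈ Finset.range j, c (n₀ + jj) := by
        rw [Finset.prod_Ico_eq_prod_range]
        simp
      have h3 : Pprod n₀ j = C ^ j * ∏ jj ∈ Finset.range j, c (n₀ + jj) := by
        simp only [hPprod_def]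
        rw [Finset.prod_mul_distrib, Finset.prod_const, Finset.card_range]
      rw [h1, h2, h3, pow_add]
      ring
    have hsum_le : ∀ n, ∑ j ∈ Finset.range n, ν (n₀ + j) / Pprod n₀ j
        ≤ (C ^ n₀ * ∏ i ∈ Finset.Ico n₁ n₀, c i) * ∑' j, w j := by
      intro n
      have hterm : ∀ j, ν (n₀ + j) / Pprod n₀ j
          = (C ^ n₀ * ∏ i ∈ Finset.Ico n₁ n₀, c i) * w ((n₀ - n₁) + j) := by
        intro j
        have hidx : n₁ + ((n₀ - n₁) + j) = n₀ + j := by omega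
        have e1 := key ((n₀ - n₁) + j) (by omega)
        rw [hidx] at e1
        rw [e1, hrel j]
        have hPp := (Ppos n₀ j).ne'
        have hprodI : (∏ i ∈ Finset.Ico n₁ n₀, c i) ≠ 0 := (Finset.prod_pos fun i _ => hc i).ne'
        field_simp
      rw [Finset.sum_congr rfl fun j _ => hterm j, ← Finset.mul_sum]
      refine mul_le_mul_of_nonneg_left ?_ hKp.le
      calc ∑ j ∈ Finset.range n, w ((n₀ - n₁) + j)
          = ∑ i ∈ Finset.Ico (n₀ - n₁) ((n₀ - n₁) + n), w i := by
            rw [Finset.sum_Ico_eq_sum_range]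
            simp
        _ ≤ ∑' j, w j := Summable.sum_le_tsum _ (fun i _ => hw_nonneg i) hw_sum
    set δ := ⨅ n : ℕ, C ^ n * ∏ i ∈ Finset.range (n + 1), c i with hδ_def
    have hδpos : 0 < δ := hinf
    have hbdd : BddBelow (Set.range fun n : ℕ => C ^ n * ∏ i ∈ Finset.range (n + 1), c i) := by
      refine ⟨0, ?_⟩
      rintro x ⟨n, rfl⟩
      exact le_of_lt (mul_pos (pow_pos hC n) (Finset.prod_pos fun i _ => hc i))
    have hmin : 0 < min 1 (C * δ) := lt_min one_pos (mul_pos hC hδpos)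
    have hlow : ∀ Mn : ℕ, min 1 (C * δ) ≤ C ^ Mn * ∏ i ∈ Finset.range Mn, c i := by
      intro Mn
      cases Mn with
      | zero => simpa using min_le_left 1 (C * δ)
      | succ k =>
        have h1 : δ ≤ C ^ k * ∏ i ∈ Finset.range (k + 1), c i := ciInf_le hbdd k
        calc min 1 (C * δ) ≤ C * δ := min_le_right _ _
          _ ≤ C * (C ^ k * ∏ i ∈ Finset.range (k + 1), c i) :=
              mul_le_mul_of_nonneg_left h1 hC.le
          _ = C ^ (k + 1) * ∏ i ∈ Finset.range (k + 1), c i := by ring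
    have hKp2 : (0:ℝ) < C ^ n₀ * ∏ i ∈ Finset.range n₀, c i :=
      mul_pos (pow_pos hC _) (Finset.prod_pos fun i _ => hc i)
    have hPlow : ∀ n, min 1 (C * δ) / (C ^ n₀ * ∏ i ∈ Finset.range n₀, c i) ≤ Pprod n₀ n := by
      intro n
      have h1 : Pprod n₀ n * (C ^ n₀ * ∏ i ∈ Finset.range n₀, c i)
          = C ^ (n₀ + n) * ∏ i ∈ Finset.range (n₀ + n), c i := by
        have h2 : ∏ i ∈ Finset.range (n₀ + n), c i
            = (∏ i ∈ Finset.range n₀, c i) * ∏ j ∈ Finset.range n, c (n₀ + j) :=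
          Finset.prod_range_add c n₀ n
        have h3 : Pprod n₀ n = C ^ n * ∏ jj ∈ Finset.range n, c (n₀ + jj) := by
          simp only [hPprod_def]
          rw [Finset.prod_mul_distrib, Finset.prod_const, Finset.card_range]
        rw [h2, h3, pow_add]
        ring
      rw [div_le_iff₀ hKp2, h1]
      exact hlow (n₀ + n)
    have hκ : 0 < min 1 (C * δ) / (C ^ n₀ * ∏ i ∈ Finset.range n₀, c i) := div_pos hmin hKp2
    refine ⟨(C ^ n₀ * ∏ i ∈ Finset.Ico n₁ n₀, c i) * ∑' j, w j
      + 1 / (min 1 (C * δ) / (C ^ n₀ * ∏ i ∈ Finset.range n₀, c i)), ?_, ?_⟩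
    · have tsw : 0 ≤ ∑' j, w j := tsum_nonneg hw_nonneg
      have hA := mul_nonneg hKp.le tsw
      have hB := one_div_pos.2 hκ
      linarith
    · intro n
      have h6 := hsum_le n
      have h7 : 1 / Pprod n₀ n
          ≤ 1 / (min 1 (C * δ) / (C ^ n₀ * ∏ i ∈ Finset.range n₀, c i)) :=
        one_div_le_one_div_of_le hκ (hPlow n)
      linarith
  have Tbound : ∀ n, 1 / M ≤ 1 - Tcomp Φt n₀ n := by
    intro n
    have h1 := le_trans (bound n n₀ le_rfl) (hM n)
    have h4 : 0 < 1 - Tcomp Φt n₀ n := by linarith [(Tmem n n₀).2]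
    rw [div_le_iff₀ hMpos]
    have h5 := (div_le_iff₀ h4).1 h1
    linarith
  -- prefix bound
  have prefix_bound : ∀ b a n,
      (∏ j ∈ Finset.range b, (p (a + j) * (1 - ρ (a + j) 0))) * (1 - Tcomp Φt (a + b) n)
        ≤ 1 - Tcomp Φt a (b + n) := by
    intro b
    induction b with
    | zero => intro a n; simp
    | succ b ih =>
      intro a n
      have hidx : b + 1 + n = (b + n) + 1 := by omega
      rw [hidx]
      have hz := Tmem (b + n) (a + 1)
      have hlow := step_low a (Tcomp Φt (a + 1) (b + n)) hz.1 hz.2.le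
      have hTc : Tcomp Φt a ((b + n) + 1) = Φt a (Tcomp Φt (a + 1) (b + n)) := rfl
      have ihh := ih (a + 1) n
      have hidx2 : (a + 1) + b = a + (b + 1) := by omega
      rw [hidx2] at ihh
      have hprod : ∏ j ∈ Finset.range (b + 1), (p (a + j) * (1 - ρ (a + j) 0))
          = (p a * (1 - ρ a 0)) *
            ∏ j ∈ Finset.range b, (p ((a + 1) + j) * (1 - ρ ((a + 1) + j) 0)) := by
        exact reidx (fun i => p i * (1 - ρ i 0)) a b
      rw [hprod, hTc]
      have hea : 0 ≤ p a * (1 - ρ a 0) :=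
        mul_nonneg (hp_mem a).1.le (by linarith [hρlt a])
      calc (p a * (1 - ρ a 0)) *
            (∏ j ∈ Finset.range b, (p ((a + 1) + j) * (1 - ρ ((a + 1) + j) 0))) *
            (1 - Tcomp Φt (a + (b + 1)) n)
          = (p a * (1 - ρ a 0)) *
            ((∏ j ∈ Finset.range b, (p ((a + 1) + j) * (1 - ρ ((a + 1) + j) 0))) *
              (1 - Tcomp Φt (a + (b + 1)) n)) := by ring
        _ ≤ (p a * (1 - ρ a 0)) * (1 - Tcomp Φt (a + 1) (b + n)) :=
            mul_le_mul_of_nonneg_left ihh hea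
        _ ≤ 1 - Φt a (Tcomp Φt (a + 1) (b + n)) := hlow
  -- conclusion
  intro q hq
  set E := ∏ j ∈ Finset.range n₀, (p j * (1 - ρ j 0)) with hE_def
  have hEpos : 0 < E := by
    refine Finset.prod_pos fun j _ => ?_
    have h1 := (hp_mem j).1
    have h2 := hρlt j
    nlinarith
  have hev : ∀ n, n₀ ≤ n → HseqF Φt n 0 ≤ 1 - E * (1 / M) := by
    intro n hn
    rw [hseqF_zero_eq_Tcomp]
    have hsplit : n = n₀ + (n - n₀) := by omega
    rw [hsplit]
    have h1 := prefix_bound n₀ 0 (n - n₀)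
    simp only [Nat.zero_add] at h1
    have h2 := Tbound (n - n₀)
    linarith [mul_le_mul_of_nonneg_left h2 hEpos.le, h1]
  have hq2 : q ≤ 1 - E * (1 / M) :=
    le_of_tendsto hq (eventually_atTop.2 ⟨n₀, hev⟩)
  have : 0 < E * (1 / M) := by positivity
  linarith
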